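/- Let H = ℓ²(ℕ, ℝ) and let R : H → H be the right-shift operator, the bounded linear map defined by R(x₀, x₁, x₂, …) = (0, x₀, x₁, …). Then the adjoint R* is the left shift L(x₀, x₁, x₂, …) = (x₁, x₂, …), and R* ∘ R = id while R ∘ R* ≠ id; consequently R is an isometry that is not normal, and the map T := (1/2) • (R + id) is iso-averaged (2 • (T* ∘ T) = T + T*) but not normal (T* ∘ T ≠ T ∘ T*). -/
import Mathlib


/-- The map `T := (1/2) • (R + id)` on `ℓ²(ℕ, ℝ)`. -/
noncomputable def halfAvg (R : lp (fun _ : ℕ => ℝ) 2 →L[ℝ] lp (fun _ : ℕ => ℝ) 2) :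
    lp (fun _ : ℕ => ℝ) 2 →L[ℝ] lp (fun _ : ℕ => ℝ) 2 :=
  (1 / 2 : ℝ) • (R + ContinuousLinearMap.id ℝ (lp (fun _ : ℕ => ℝ) 2))

set_option maxHeartbeats 1000000

noncomputable abbrev Hsp := lp (fun _ : ℕ => ℝ) 2

noncomputable def ee (n : ℕ) : Hsp := lp.single 2 n (1 : ℝ)

lemma coord_eq_inner (y : Hsp) (n : ℕ) : y n = @inner ℝ _ _ (ee n) y := by
  rw [ee, lp.inner_single_left]
  simp [RCLike.inner_apply]

/-- Let `R` be the right shift on `H = ℓ²(ℕ, ℝ)`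
(`R(x₀, x₁, …) = (0, x₀, x₁, …)`). Then its adjoint is the left shift
`L(x₀, x₁, …) = (x₁, x₂, …)`, `R* ∘ R = id` while `R ∘ R* ≠ id` (so `R` is an isometry
that is not normal), and `T := (1/2) • (R + id)` is iso-averaged
(`2 • (T* ∘ T) = T + T*`) but not normal (`T* ∘ T ≠ T ∘ T*`). -/
theorem rightShift_isoAveraged_not_normal
    (R : lp (fun _ : ℕ => ℝ) 2 →L[ℝ] lp (fun _ : ℕ => ℝ) 2)
    (hR0 : ∀ x : lp (fun _ : ℕ => ℝ) 2, R x 0 = 0)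
    (hRs : ∀ (x : lp (fun _ : ℕ => ℝ) 2) (n : ℕ), R x (n + 1) = x n) :
    (∀ (x : lp (fun _ : ℕ => ℝ) 2) (n : ℕ),
        ContinuousLinearMap.adjoint R x n = x (n + 1)) ∧
      ContinuousLinearMap.adjoint R ∘L R =
        ContinuousLinearMap.id ℝ (lp (fun _ : ℕ => ℝ) 2) ∧
      R ∘L ContinuousLinearMap.adjoint R ≠
        ContinuousLinearMap.id ℝ (lp (fun _ : ℕ => ℝ) 2) ∧
      (∀ x : lp (fun _ : ℕ => ℝ) 2, ‖R x‖ = ‖x‖) ∧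
      ContinuousLinearMap.adjoint R ∘L R ≠ R ∘L ContinuousLinearMap.adjoint R ∧
      (2 : ℝ) • (ContinuousLinearMap.adjoint (halfAvg R) ∘L halfAvg R) =
        halfAvg R + ContinuousLinearMap.adjoint (halfAvg R) ∧
      ContinuousLinearMap.adjoint (halfAvg R) ∘L halfAvg R ≠
        halfAvg R ∘L ContinuousLinearMap.adjoint (halfAvg R) := by
  set S := ContinuousLinearMap.adjoint R with hS
  -- adjoint formula
  have hRe : ∀ n, R (ee n) = ee (n + 1) := by
    intro n
    apply lp.ext
    funext j
    cases j with
    | zero =>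
      rw [hR0]
      unfold ee
      exact (lp.single_apply_ne (E := fun _ : ℕ => ℝ) 2 _ _
        (Ne.symm (Nat.succ_ne_zero n))).symm
    | succ m =>
      rw [hRs]
      unfold ee
      by_cases h : m = n
      · subst h
        rw [lp.single_apply_self, lp.single_apply_self]
      · rw [lp.single_apply_ne 2 _ _ h, lp.single_apply_ne 2 _ _ (by omega : m + 1 ≠ n + 1)]
  have hadj : ∀ (x : Hsp) (n : ℕ), S x n = x (n + 1) := by
    intro x n
    rw [coord_eq_inner (S x) n, hS, ContinuousLinearMap.adjoint_inner_right, hRe,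
      ← coord_eq_inner]
  -- S ∘ R = id
  have hSR : S ∘L R = ContinuousLinearMap.id ℝ Hsp := by
    ext x : 1
    apply lp.ext
    funext n
    show S (R x) n = x n
    rw [hadj, hRs]
  have hSRx : ∀ x : Hsp, S (R x) = x := fun x =>
    ContinuousLinearMap.ext_iff.mp hSR x
  -- S e0 = 0
  have hSe0 : S (ee 0) = 0 := by
    apply lp.ext
    funext n
    rw [hadj]
    unfold ee
    rw [lp.single_apply_ne 2 _ _ (Nat.succ_ne_zero n)]
    rfl
  have hee0 : (ee 0) 0 = 1 := lp.single_apply_self (E := fun _ : ℕ => ℝ) 2 0 (1 : ℝ)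
  -- R ∘ S ≠ id
  have hRSne : R ∘L S ≠ ContinuousLinearMap.id ℝ Hsp := by
    intro h
    have h0 : R (S (ee 0)) 0 = (ee 0) 0 :=
      congrArg (fun y : Hsp => y 0) (ContinuousLinearMap.ext_iff.mp h (ee 0))
    rw [hR0, hee0] at h0
    exact zero_ne_one h0
  -- isometry
  have hnorm : ∀ x : Hsp, ‖R x‖ = ‖x‖ := by
    intro x
    have : @inner ℝ _ _ (R x) (R x) = @inner ℝ _ _ x x := by
      rw [← ContinuousLinearMap.adjoint_inner_left, ← hS, hSRx]
    rw [@norm_eq_sqrt_real_inner _ _ _ (R x), @norm_eq_sqrt_real_inner _ _ _ x, this]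
  -- S R ≠ R S
  have hnotnormal : S ∘L R ≠ R ∘L S := by
    intro h
    have h0 : S (R (ee 0)) 0 = R (S (ee 0)) 0 :=
      congrArg (fun y : Hsp => y 0) (ContinuousLinearMap.ext_iff.mp h (ee 0))
    rw [hSRx, hee0, hR0] at h0
    exact one_ne_zero h0
  -- adjoint of halfAvg
  have hTadj : ContinuousLinearMap.adjoint (halfAvg R) =
      (1 / 2 : ℝ) • (S + ContinuousLinearMap.id ℝ Hsp) := by
    rw [halfAvg, map_smulₛₗ, map_add, ContinuousLinearMap.adjoint_id, hS]
    norm_num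
  have hTapp : ∀ x : Hsp, halfAvg R x = (1 / 2 : ℝ) • (R x + x) := by
    intro x; rw [halfAvg]; rfl
  have hTadjapp : ∀ x : Hsp, ContinuousLinearMap.adjoint (halfAvg R) x
      = (1 / 2 : ℝ) • (S x + x) := by
    intro x; rw [hTadj]; rfl
  refine ⟨hadj, hSR, hRSne, hnorm, hnotnormal, ?_, ?_⟩
  · ext x : 1
    show (2 : ℝ) • (ContinuousLinearMap.adjoint (halfAvg R)) (halfAvg R x)
      = halfAvg R x + (ContinuousLinearMap.adjoint (halfAvg R)) x
    rw [hTapp, hTadjapp, hTadjapp, map_smul, map_add, hSRx, smul_smul,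
      show (2 : ℝ) * (1 / 2) = 1 from by norm_num, one_smul, add_comm x (S x)]
    exact add_comm ((1/2 : ℝ) • (S x + x)) ((1/2 : ℝ) • (R x + x))
  · intro h
    have h0 : (ContinuousLinearMap.adjoint (halfAvg R)) (halfAvg R (ee 0)) 0
        = halfAvg R ((ContinuousLinearMap.adjoint (halfAvg R)) (ee 0)) 0 :=
      congrArg (fun y : Hsp => y 0) (ContinuousLinearMap.ext_iff.mp h (ee 0))
    rw [hTapp, hTadjapp, hTadjapp, map_smul, map_add, hSRx, hSe0, hTapp] at h0
    rw [zero_add, add_zero, map_smul] at h0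
    simp only [lp.coeFn_smul, lp.coeFn_add, Pi.smul_apply, Pi.add_apply, hR0, hee0,
      smul_eq_mul] at h0
    norm_num at h0
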